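/- For every d ≥ 1 there exists a constant C_d > 0 such that for every convex set K ⊆ [-1/2, 1/2]^d and every a ∈ (0, 1], the number of indices j ∈ Z^d for which the cube a(j + [0,1]^d) intersects both the closure of K and the closure of the complement ℝ^d \ K is at most C_d a^{-(d-1)}. In other words, every convex subset of (-1/2, 1/2]^d satisfies the boundary condition. -/

import Mathlib

open MeasureTheory Filter Topology

section aux
open Set Filter Topology


lemma preconn_frontier {E : Type*} [TopologicalSpace E] {Q K : Set E}
    (hQ : IsPreconnected Q) (h1 : (Q ∩ closure K).Nonempty)
    (h2 : (Q ∩ closure Kᶜ).Nonempty) : (Q ∩ frontier K).Nonempty := by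
  by_contra h
  rw [Set.not_nonempty_iff_eq_empty] at h
  have hsub : Q ⊆ interior K ∪ interior Kᶜ := by
    intro x hx
    by_contra hx'
    simp only [Set.mem_union] at hx'
    obtain ⟨h1', h2'⟩ := not_or.mp hx'
    have hxK : x ∈ closure K := by
      rwa [interior_compl, Set.notMem_compl_iff] at h2'
    have hxKc : x ∈ closure Kᶜ := by
      rw [closure_compl, Set.mem_compl_iff]
      exact h1'
    have : x ∈ Q ∩ frontier K := ⟨hx, by rw [frontier_eq_closure_inter_closure]; exact ⟨hxK, hxKc⟩⟩
    rw [h] at this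
    exact this
  obtain ⟨p, hp⟩ := hQ (interior K) (interior Kᶜ) isOpen_interior isOpen_interior hsub
    (by
      obtain ⟨x, hxQ, hxK⟩ := h1
      refine ⟨x, hxQ, ?_⟩
      rcases hsub hxQ with h' | h'
      · exact h'
      · rw [interior_compl] at h'; exact absurd hxK h')
    (by
      obtain ⟨x, hxQ, hxK⟩ := h2
      refine ⟨x, hxQ, ?_⟩
      rcases hsub hxQ with h' | h'
      · rw [closure_compl] at hxK
        exact absurd h' hxK
      · exact h')
  exact absurd (⟨interior_subset hp.2.1, interior_subset hp.2.2⟩ : p ∈ K ∩ Kᶜ) (by simp)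


lemma exists_support_functional {d : ℕ} {K : Set (Fin d → ℝ)} (hK : Convex ℝ K)
    (hne : K.Nonempty) {x : Fin d → ℝ} (hx : x ∈ frontier K) :
    ∃ f : (Fin d → ℝ) →ₗ[ℝ] ℝ, f ≠ 0 ∧ ∀ z ∈ closure K, f z ≤ f x := by
  by_cases hi : (interior K).Nonempty
  · obtain ⟨y₀, hy₀⟩ := hi
    have hxni : x ∉ interior K := hx.2
    obtain ⟨f, hf⟩ := geometric_hahn_banach_open_point hK.interior isOpen_interior hxni
    refine ⟨f.toLinearMap, ?_, ?_⟩
    · intro h0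
      have : f y₀ = 0 := by
        have := congrArg (fun g => g y₀) h0
        simpa using this
      have : (0:ℝ) < f x := this ▸ hf y₀ hy₀
      have : f x = 0 := by
        have := congrArg (fun g => g x) h0
        simpa using this
      linarith [hf y₀ hy₀, this]
    · intro z hz
      -- limit argument along the segment from y₀ (interior) to z (closure)
      have hseg : ∀ t : ℝ, t ∈ Set.Ioc (0:ℝ) 1 → f (t • y₀ + (1 - t) • z) < f x := by
        intro t ht
        exact hf _ (hK.combo_interior_closure_mem_interior hy₀ hz ht.1 (by linarith [ht.2]) (by ring))
      have hcont : Tendsto (fun t : ℝ => f (t • y₀ + (1 - t) • z)) (𝓝[>] (0:ℝ))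
          (𝓝 (f ((0:ℝ) • y₀ + ((1:ℝ) - (0:ℝ)) • z))) := by
        apply Tendsto.mono_left ?_ nhdsWithin_le_nhds
        have hc : Continuous (fun t : ℝ => f (t • y₀ + (1 - t) • z)) := by
          apply f.continuous.comp
          exact ((continuous_id.smul continuous_const).add
            ((continuous_const.sub continuous_id).smul continuous_const))
        exact hc.tendsto 0
      have hlim : Tendsto (fun t : ℝ => f (t • y₀ + (1 - t) • z)) (𝓝[>] (0:ℝ)) (𝓝 (f z)) := by
        simpa using hcont
      refine le_of_tendsto hlim ?_
      filter_upwards [Ioc_mem_nhdsGT_of_mem (Set.mem_Ico.mpr ⟨le_refl _, zero_lt_one⟩)] with t ht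
      exact (hseg t ht).le
  · -- K has empty interior: it lies in a proper affine subspace
    have hspan : affineSpan ℝ K ≠ ⊤ := by
      intro htop
      exact hi (hK.interior_nonempty_iff_affineSpan_eq_top.mpr htop)
    have hWne : (affineSpan ℝ K).direction ≠ ⊤ := by
      intro htop
      exact hspan ((AffineSubspace.direction_eq_top_iff_of_nonempty
        ((affineSpan_nonempty (k := ℝ) (P := Fin d → ℝ)).mpr hne)).mp htop)
    obtain ⟨f, hf0, hfW⟩ := Submodule.exists_dual_map_eq_bot_of_lt_top
      (lt_top_iff_ne_top.mpr hWne) inferInstance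
    have hclos : closure K ⊆ (affineSpan ℝ K : Set (Fin d → ℝ)) :=
      closure_minimal (subset_affineSpan ℝ K) (affineSpan ℝ K).closed_of_finiteDimensional
    have hxmem : x ∈ affineSpan ℝ K := hclos hx.1
    refine ⟨f, hf0, ?_⟩
    intro z hz
    have hzmem : z ∈ affineSpan ℝ K := hclos hz
    have hsub : z - x ∈ (affineSpan ℝ K).direction := by
      simpa using AffineSubspace.vsub_mem_direction hzmem hxmem
    have : f (z - x) = 0 := by
      have : f (z - x) ∈ (affineSpan ℝ K).direction.map f := Submodule.mem_map_of_mem hsub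
      rw [hfW] at this
      simpa using this
    have := f.map_sub z x
    linarith [this ▸ ‹f (z - x) = 0›]

lemma support_vec {d : ℕ} (f : (Fin d → ℝ) →ₗ[ℝ] ℝ) (hf : f ≠ 0) (x : Fin d → ℝ)
    (K : Set (Fin d → ℝ)) (hsup : ∀ z ∈ closure K, f z ≤ f x) :
    ∃ u : Fin d → ℝ, u ≠ 0 ∧ ∀ z ∈ closure K, ∑ k, u k * (z k - x k) ≤ 0 := by
  set u : Fin d → ℝ := fun i => f (fun j => if i = j then 1 else 0) with hu
  have hform : ∀ z : Fin d → ℝ, f z = ∑ k, z k * u k := by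
    intro z
    rw [LinearMap.pi_apply_eq_sum_univ f z]
    simp [hu, smul_eq_mul]
  refine ⟨u, ?_, ?_⟩
  · intro h0
    apply hf
    apply LinearMap.ext
    intro z
    rw [hform z, h0]
    simp
  · intro z hz
    have h1 : ∑ k, u k * (z k - x k) = f z - f x := by
      rw [hform z, hform x, ← Finset.sum_sub_distrib]
      congr 1; ext k; ring
    rw [h1]
    linarith [hsup z hz]

end aux

/-- every convex subset of the unit cube satisfies the boundary
condition, with a constant depending only on the dimension. -/
theorem stmt_7 (d : ℕ) (hd : 1 ≤ d) :
    ∃ C : ℝ, 0 < C ∧ ∀ K : Set (Fin d → ℝ), Convex ℝ K →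
      K ⊆ Set.univ.pi (fun _ => Set.Icc (-(1/2) : ℝ) (1/2)) →
      ∀ a : ℝ, 0 < a → a ≤ 1 →
      (Set.ncard {j : Fin d → ℤ |
        (Set.univ.pi (fun i => Set.Icc (a * (j i : ℝ)) (a * ((j i : ℝ) + 1))) ∩
          closure K).Nonempty ∧
        (Set.univ.pi (fun i => Set.Icc (a * (j i : ℝ)) (a * ((j i : ℝ) + 1))) ∩
          closure Kᶜ).Nonempty} : ℝ) ≤ C * a ^ ((1 : ℤ) - d) := by
  classical
  have hdR : (1:ℝ) ≤ (d:ℝ) := by exact_mod_cast hd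
  refine ⟨((2*(d:ℝ)+1) * ((d:ℝ)*2) * 4^(d-1) : ℝ), ?_, ?_⟩
  · apply mul_pos (mul_pos (by linarith) (by linarith)) (by positivity)
  intro K hKconv hKsub a ha ha1
  set S := {j : Fin d → ℤ |
        (Set.univ.pi (fun i => Set.Icc (a * (j i : ℝ)) (a * ((j i : ℝ) + 1))) ∩
          closure K).Nonempty ∧
        (Set.univ.pi (fun i => Set.Icc (a * (j i : ℝ)) (a * ((j i : ℝ) + 1))) ∩
          closure Kᶜ).Nonempty} with hSdef
  rcases K.eq_empty_or_nonempty with rfl | hne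
  · have hS0 : S = ∅ := by
      ext j
      simp only [hSdef, Set.mem_setOf_eq, Set.mem_empty_iff_false, iff_false]
      intro hcon
      obtain ⟨x, -, hx⟩ := hcon.1
      simp [closure_empty] at hx
    rw [hS0]
    simp only [Set.ncard_empty, Nat.cast_zero]
    have h1 : (0:ℝ) < a ^ ((1:ℤ) - d) := zpow_pos ha _
    have h2 : (0:ℝ) ≤ (2*(d:ℝ)+1) * ((d:ℝ)*2) * 4^(d-1) := by positivity
    nlinarith [h1, h2]
  -- closure K is inside the closed unit cube
  have hKbox : closure K ⊆ Set.univ.pi fun _ : Fin d => Set.Icc (-(1/2):ℝ) (1/2) :=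
    closure_minimal hKsub (isClosed_set_pi fun i _ => isClosed_Icc)
  -- pick a frontier point and supporting vector in each boundary cube
  have hdata : ∀ j ∈ S, ∃ x u : Fin d → ℝ,
      (∀ k, a * j k ≤ x k ∧ x k ≤ a * j k + a) ∧ x ∈ closure K ∧ u ≠ 0 ∧
      ∀ z ∈ closure K, ∑ k, u k * (z k - x k) ≤ 0 := by
    intro j hj
    have hQconv : Convex ℝ (Set.univ.pi
        (fun i => Set.Icc (a * (j i : ℝ)) (a * ((j i : ℝ) + 1)))) :=
      convex_pi (fun i _ => convex_Icc _ _)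
    obtain ⟨x, hxQ, hxF⟩ := preconn_frontier hQconv.isPreconnected hj.1 hj.2
    obtain ⟨f, hf0, hfsup⟩ := exists_support_functional hKconv hne hxF
    obtain ⟨u, hu0, husup⟩ := support_vec f hf0 x K hfsup
    refine ⟨x, u, ?_, hxF.1, hu0, husup⟩
    intro k
    have := hxQ k (Set.mem_univ k)
    simp only [Set.mem_Icc] at this
    constructor
    · exact this.1
    · calc x k ≤ a * ((j k : ℝ) + 1) := this.2
        _ = a * j k + a := by ring
  choose! x u hxcube hxcl hu0 hsupp using hdata
  -- the coordinate where the supporting vector is largest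
  have hIex : ∀ j : Fin d → ℤ, ∃ i : Fin d, ∀ k, |u j k| ≤ |u j i| := by
    intro j
    obtain ⟨i, -, hi⟩ := Finset.exists_max_image Finset.univ (fun k => |u j k|)
      ⟨⟨0, hd⟩, Finset.mem_univ _⟩
    exact ⟨i, fun k => hi k (Finset.mem_univ _)⟩
  choose I hImax using hIex
  have hune : ∀ j ∈ S, u j (I j) ≠ 0 := by
    intro j hj h0
    apply hu0 j hj
    funext k
    have := hImax j k
    rw [h0, abs_zero] at this
    exact abs_eq_zero.mp (le_antisymm this (abs_nonneg _))
  -- main geometric estimate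
  have hdm1 : ((d - 1 : ℕ) : ℝ) = (d:ℝ) - 1 := by
    rw [Nat.cast_sub hd]; norm_num
  have main : ∀ i : Fin d, ∀ j₁ ∈ S, ∀ j₂ ∈ S, (∀ k, k ≠ i → j₁ k = j₂ k) → I j₁ = i →
      u j₁ i * (x j₂ i - x j₁ i) ≤ ((d - 1 : ℕ) : ℝ) * (|u j₁ i| * a) := by
    intro i j₁ hj₁ j₂ hj₂ hc hI₁
    have h0 := hsupp j₁ hj₁ (x j₂) (hxcl j₂ hj₂)
    rw [← Finset.add_sum_erase _ _ (Finset.mem_univ i)] at h0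
    have hterm : ∀ k ∈ Finset.univ.erase i, -(|u j₁ i| * a) ≤ u j₁ k * (x j₂ k - x j₁ k) := by
      intro k hk
      have hk' : k ≠ i := Finset.ne_of_mem_erase hk
      have hxc : |x j₂ k - x j₁ k| ≤ a := by
        have h1 := hxcube j₁ hj₁ k
        have h2 := hxcube j₂ hj₂ k
        rw [← hc k hk'] at h2
        rw [abs_sub_le_iff]
        constructor <;> linarith [h1.1, h1.2, h2.1, h2.2]
      have habs : |u j₁ k * (x j₂ k - x j₁ k)| ≤ |u j₁ i| * a := by
        rw [abs_mul]
        have hm : |u j₁ k| ≤ |u j₁ i| := by rw [← hI₁]; exact hImax j₁ k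
        exact mul_le_mul hm hxc (abs_nonneg _) (abs_nonneg _)
      linarith [neg_abs_le (u j₁ k * (x j₂ k - x j₁ k)), habs]
    have hsum : -(((d - 1 : ℕ) : ℝ) * (|u j₁ i| * a)) ≤
        ∑ k ∈ Finset.univ.erase i, u j₁ k * (x j₂ k - x j₁ k) := by
      have := Finset.sum_le_sum hterm
      have hcount : ∑ _k ∈ Finset.univ.erase i, -(|u j₁ i| * a)
          = -(((d - 1 : ℕ) : ℝ) * (|u j₁ i| * a)) := by
        rw [Finset.sum_const, Finset.card_erase_of_mem (Finset.mem_univ i),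
          Finset.card_univ, Fintype.card_fin]
        simp [nsmul_eq_mul]
      linarith [this, hcount]
    linarith
  -- one-sided comparison of indices in the same column
  have key : ∀ i : Fin d, ∀ j ∈ S, ∀ j' ∈ S, I j = i → I j' = i →
      ((0 < u j i) ↔ (0 < u j' i)) → (∀ k, k ≠ i → j k = j' k) →
      (j i : ℝ) ≤ (j' i : ℝ) + d := by
    intro i j hj j' hj' hIj hIj' hsgn hcoord
    have hxle : x j i - x j' i ≤ ((d - 1 : ℕ) : ℝ) * a := by
      by_cases hpos : 0 < u j i
      · have hpos' : 0 < u j' i := hsgn.mp hpos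
        have hm := main i j' hj' j hj (fun k hk => (hcoord k hk).symm) hIj'
        rw [abs_of_pos hpos'] at hm
        have h2 : u j' i * (x j i - x j' i) ≤ u j' i * (((d - 1 : ℕ) : ℝ) * a) := by
          calc u j' i * (x j i - x j' i) ≤ ((d - 1 : ℕ) : ℝ) * (u j' i * a) := hm
            _ = u j' i * (((d - 1 : ℕ) : ℝ) * a) := by ring
        exact (mul_le_mul_iff_right₀ hpos').mp h2
      · have hne' := hune j hj
        rw [hIj] at hne'
        have hneg : u j i < 0 := lt_of_le_of_ne (not_lt.mp hpos) hne'
        have hm := main i j hj j' hj' hcoord hIj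
        rw [abs_of_neg hneg] at hm
        have h2 : (-(u j i)) * (x j' i - x j i) ≥ (-(u j i)) * (-(((d - 1 : ℕ) : ℝ) * a)) := by
          nlinarith [hm]
        have h3 := (mul_le_mul_iff_right₀ (neg_pos.mpr hneg)).mp h2
        linarith
    have h1 := (hxcube j hj i).1
    have h2 := (hxcube j' hj' i).2
    have hda : a * (j i : ℝ) ≤ a * ((j' i : ℝ) + d) := by
      have : ((d - 1 : ℕ) : ℝ) * a = ((d:ℝ) - 1) * a := by rw [hdm1]
      nlinarith [hxle, h1, h2, this]
    have := (mul_le_mul_iff_right₀ ha).mp hda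
    linarith
  -- bounding the coordinates of indices in S
  set m : ℤ := ⌊1/(2*a)⌋ with hm
  have hm0 : 0 ≤ m := Int.floor_nonneg.mpr (by positivity)
  set lo : ℤ := -m - 2 with hlo
  set hi : ℤ := m with hhi
  have hbox : ∀ j ∈ S, ∀ k, j k ∈ Finset.Icc lo hi := by
    intro j hj k
    have hcube := hxcube j hj k
    have hxb := hKbox (hxcl j hj) k (Set.mem_univ k)
    simp only [Set.mem_Icc] at hxb
    rw [Finset.mem_Icc]
    have key1 : a * (1/(2*a)) = 1/2 := by field_simp
    constructor
    · have h3 : a * (-(1/(2*a)) - 1) ≤ a * (j k : ℝ) := by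
        have he : a * (-(1/(2*a)) - 1) = -(1/2) - a := by
          rw [mul_sub, mul_neg, key1]; ring
        linarith [hcube.2, hxb.1]
      have h4 : -(1/(2*a)) - 1 ≤ (j k : ℝ) := (mul_le_mul_iff_right₀ ha).mp h3
      have h2 : (1:ℝ)/(2*a) < (m:ℝ) + 1 := Int.lt_floor_add_one _
      have hr : ((lo:ℝ)) < (j k : ℝ) := by
        have hlocast : ((lo:ℝ)) = -(m:ℝ) - 2 := by rw [hlo]; push_cast; ring
        linarith
      exact_mod_cast hr.le
    · have h3 : a * (j k : ℝ) ≤ a * (1/(2*a)) := by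
        rw [key1]; linarith [hcube.1, hxb.2]
      exact Int.le_floor.mpr ((mul_le_mul_iff_right₀ ha).mp h3)
  -- finiteness
  have hfin : S.Finite := by
    apply Set.Finite.subset (Set.Finite.pi (fun k : Fin d => Set.finite_Icc lo hi))
    intro j hj
    rw [Set.mem_univ_pi]
    intro k
    simpa using hbox j hj k
  set F := hfin.toFinset with hF
  -- the charge map
  set g : (Fin d → ℤ) → Fin d × Bool × (Fin d → ℤ) :=
    fun j => (I j, decide (0 < u j (I j)), Function.update j (I j) 0) with hg
  set c : ℕ := (Finset.Icc lo hi).card with hc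
  set T : Finset (Fin d × Bool × (Fin d → ℤ)) :=
    Finset.univ.biUnion (fun i : Fin d => Finset.univ.biUnion (fun b : Bool =>
      {i} ×ˢ {b} ×ˢ Fintype.piFinset (fun k => if k = i then ({0} : Finset ℤ)
        else Finset.Icc lo hi))) with hT
  have hmaps : ∀ j ∈ F, g j ∈ T := by
    intro j hjF
    have hj : j ∈ S := hfin.mem_toFinset.mp hjF
    simp only [hg]
    rw [hT]
    refine Finset.mem_biUnion.mpr ⟨I j, Finset.mem_univ _, ?_⟩
    refine Finset.mem_biUnion.mpr ⟨decide (0 < u j (I j)), Finset.mem_univ _, ?_⟩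
    rw [Finset.mem_product]
    refine ⟨Finset.mem_singleton_self _, ?_⟩
    rw [Finset.mem_product]
    refine ⟨Finset.mem_singleton_self _, ?_⟩
    rw [Fintype.mem_piFinset]
    intro k
    by_cases hk : k = I j
    · subst hk
      simp [Function.update_self]
    · rw [if_neg hk]
      show Function.update j (I j) 0 k ∈ Finset.Icc lo hi
      rw [Function.update_of_ne hk]
      exact hbox j hj k
  have hfiber : ∀ b ∈ T, (F.filter (fun j => g j = b)).card ≤ 2*d+1 := by
    intro b _
    rcases (F.filter (fun j => g j = b)).eq_empty_or_nonempty with he | ⟨j₀, hj₀⟩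
    · simp [he]
    · have hj₀F := (Finset.mem_filter.mp hj₀).1
      have hj₀S : j₀ ∈ S := hfin.mem_toFinset.mp hj₀F
      have hgj₀ : g j₀ = b := (Finset.mem_filter.mp hj₀).2
      set i := I j₀ with hidef
      have hsub : F.filter (fun j => g j = b) ⊆
          (Finset.Icc (j₀ i - d) (j₀ i + d)).image (fun n => Function.update j₀ i n) := by
        intro j hjf
        have hjF := (Finset.mem_filter.mp hjf).1
        have hjS : j ∈ S := hfin.mem_toFinset.mp hjF
        have hgj : g j = g j₀ := (Finset.mem_filter.mp hjf).2.trans hgj₀.symm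
        simp only [hg, Prod.mk.injEq] at hgj
        obtain ⟨hI1, hI2, hI3⟩ := hgj
        have hIji : I j = i := hI1
        have hcoord : ∀ k, k ≠ i → j k = j₀ k := by
          intro k hk
          have := congrFun hI3 k
          rwa [Function.update_of_ne (hIji ▸ hk : k ≠ I j),
            Function.update_of_ne (hidef ▸ hk : k ≠ I j₀)] at this
        have hsgn : (0 < u j i) ↔ (0 < u j₀ i) := by
          have : decide (0 < u j (I j)) = decide (0 < u j₀ (I j₀)) := hI2
          rw [hIji, ← hidef] at this
          exact decide_eq_decide.mp this
        have hk1 : (j i : ℝ) ≤ (j₀ i : ℝ) + d :=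
          key i j hjS j₀ hj₀S hIji rfl hsgn hcoord
        have hk2 : (j₀ i : ℝ) ≤ (j i : ℝ) + d :=
          key i j₀ hj₀S j hjS rfl hIji hsgn.symm (fun k hk => (hcoord k hk).symm)
        have hmem : j i ∈ Finset.Icc (j₀ i - d) (j₀ i + d) := by
          rw [Finset.mem_Icc]
          constructor
          · have : (j₀ i : ℝ) - d ≤ (j i : ℝ) := by linarith
            exact_mod_cast this
          · have : (j i : ℝ) ≤ (j₀ i : ℝ) + d := hk1
            exact_mod_cast this
        refine Finset.mem_image.mpr ⟨j i, hmem, ?_⟩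
        funext k
        by_cases hk : k = i
        · subst hk; simp [Function.update_self]
        · rw [Function.update_of_ne hk]
          exact (hcoord k hk).symm
      calc (F.filter (fun j => g j = b)).card
          ≤ ((Finset.Icc (j₀ i - d) (j₀ i + d)).image (fun n => Function.update j₀ i n)).card :=
            Finset.card_le_card hsub
        _ ≤ (Finset.Icc (j₀ i - d) (j₀ i + d)).card := Finset.card_image_le
        _ = 2*d+1 := by rw [Int.card_Icc]; omega
  have hcardF : F.card ≤ (2*d+1) * T.card :=
    Finset.card_le_mul_card_image_of_maps_to hmaps _ hfiber
  have hcardT : T.card ≤ d * (2 * c^(d-1)) := by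
    rw [hT]
    refine le_trans Finset.card_biUnion_le ?_
    have hone : ∀ i : Fin d, (Finset.univ.biUnion (fun b : Bool =>
        {i} ×ˢ {b} ×ˢ Fintype.piFinset (fun k => if k = i then ({0} : Finset ℤ)
          else Finset.Icc lo hi))).card ≤ 2 * c^(d-1) := by
      intro i
      refine le_trans Finset.card_biUnion_le (le_of_eq ?_)
      have hcardP : (Fintype.piFinset (fun k => if k = i then ({0} : Finset ℤ)
          else Finset.Icc lo hi)).card = c^(d-1) := by
        rw [Fintype.card_piFinset]
        have : ∀ k : Fin d, (if k = i then ({0} : Finset ℤ) else Finset.Icc lo hi).card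
            = if k = i then 1 else c := by
          intro k
          by_cases hk : k = i <;> simp [hk, hc]
        rw [Finset.prod_congr rfl (fun k _ => this k)]
        rw [← Finset.mul_prod_erase Finset.univ _ (Finset.mem_univ i), if_pos rfl, one_mul]
        rw [Finset.prod_congr rfl (fun k hk => if_neg (Finset.ne_of_mem_erase hk)),
          Finset.prod_const, Finset.card_erase_of_mem (Finset.mem_univ i),
          Finset.card_univ, Fintype.card_fin]
      have hcardcell : ∀ b : Bool, ({i} ×ˢ {b} ×ˢ Fintype.piFinset
          (fun k => if k = i then ({0} : Finset ℤ) else Finset.Icc lo hi)).card = c^(d-1) := by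
        intro b
        rw [Finset.card_product, Finset.card_product, Finset.card_singleton,
          Finset.card_singleton, hcardP]
        ring
      calc ∑ b : Bool, ({i} ×ˢ {b} ×ˢ Fintype.piFinset
            (fun k => if k = i then ({0} : Finset ℤ) else Finset.Icc lo hi)).card
          = ∑ _b : Bool, c^(d-1) := by
            exact Finset.sum_congr rfl (fun b _ => hcardcell b)
        _ = 2 * c^(d-1) := by simp [two_mul]
    calc ∑ i : Fin d, (Finset.univ.biUnion (fun b : Bool =>
          {i} ×ˢ {b} ×ˢ Fintype.piFinset (fun k => if k = i then ({0} : Finset ℤ)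
            else Finset.Icc lo hi))).card
        ≤ ∑ _i : Fin d, 2 * c^(d-1) := Finset.sum_le_sum (fun i _ => hone i)
      _ = d * (2 * c^(d-1)) := by simp [Finset.sum_const, Finset.card_univ]
  -- real-number bound on c
  have hcR : (c : ℝ) ≤ 4 / a := by
    have hcval : (c:ℤ) = 2*m + 3 := by
      rw [hc, Int.card_Icc, hlo, hhi]
      omega
    have hcR' : (c:ℝ) = 2*(m:ℝ) + 3 := by exact_mod_cast congrArg (Int.cast : ℤ → ℝ) hcval
    have hmR : (m:ℝ) ≤ 1/(2*a) := Int.floor_le _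
    rw [hcR', le_div_iff₀ ha]
    have h1 : (m:ℝ)*a ≤ 1/2 := by
      calc (m:ℝ)*a ≤ 1/(2*a)*a := mul_le_mul_of_nonneg_right hmR ha.le
        _ = 1/2 := by field_simp
    nlinarith [h1, ha.le, ha1]
  -- put everything together
  have hncard : (S.ncard : ℝ) = (F.card : ℝ) := by
    rw [Set.ncard_eq_toFinset_card S hfin]
  have hfinal : (F.card : ℝ) ≤ (2*(d:ℝ)+1) * ((d:ℝ) * (2 * (4/a)^(d-1))) := by
    have h1 : (F.card : ℝ) ≤ (2*(d:ℝ)+1) * ((d:ℝ) * (2 * (c:ℝ)^(d-1))) := by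
      have := hcardF.trans (Nat.mul_le_mul_left _ hcardT)
      calc (F.card : ℝ) ≤ (((2*d+1) * (d * (2 * c^(d-1))) : ℕ) : ℝ) := by exact_mod_cast this
        _ = (2*(d:ℝ)+1) * ((d:ℝ) * (2 * (c:ℝ)^(d-1))) := by push_cast; ring
    have h2 : ((c:ℝ))^(d-1) ≤ (4/a)^(d-1) :=
      pow_le_pow_left₀ (Nat.cast_nonneg c) hcR _
    have h3 : (0:ℝ) ≤ 2*(d:ℝ)+1 := by linarith
    have h4 : (0:ℝ) ≤ (d:ℝ) := by linarith
    calc (F.card:ℝ) ≤ (2*(d:ℝ)+1) * ((d:ℝ) * (2 * (c:ℝ)^(d-1))) := h1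
      _ ≤ (2*(d:ℝ)+1) * ((d:ℝ) * (2 * (4/a)^(d-1))) := by
          apply mul_le_mul_of_nonneg_left (mul_le_mul_of_nonneg_left (by linarith) h4) h3
  have hzp : a ^ ((1:ℤ) - d) = (a^(d-1 : ℕ))⁻¹ := by
    have h1 : (1:ℤ) - d = -((d-1 : ℕ):ℤ) := by
      rw [Nat.cast_sub hd]; ring
    rw [h1, zpow_neg, zpow_natCast]
  have hdiv : ((4:ℝ)/a)^(d-1) = 4^(d-1) * (a^(d-1:ℕ))⁻¹ := by
    rw [div_pow, div_eq_mul_inv]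
  rw [hncard, hzp]
  calc (F.card : ℝ) ≤ (2*(d:ℝ)+1) * ((d:ℝ) * (2 * (4/a)^(d-1))) := hfinal
    _ = (2*(d:ℝ)+1) * ((d:ℝ)*2) * 4^(d-1) * (a^(d-1:ℕ))⁻¹ := by rw [hdiv]; ring
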